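/- Let H = ⊕_{i≥0} H_{(i)} be a graded Hopf algebra over k with B = H_{(0)} and M = H_{(1)}. Then M is a B-Hopf bimodule, where the actions are α⁻ = π₁∘μ∘(ι₀⊗ι₁), α⁺ = π₁∘μ∘(ι₁⊗ι₀) and the coactions are δ⁻ = (π₀⊗π₁)∘Δ∘ι₁, δ⁺ = (π₁⊗π₀)∘Δ∘ι₁. -/

import Mathlib

open TensorProduct Coalgebra

namespace Stmt13Aux

variable {k H : Type*} [CommRing k] [Ring H] [HopfAlgebra k H]
variable (gr : ℕ → Submodule k H) (π : ℕ → (H →ₗ[k] H))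

/-- The graded piece `gr a ⊗ gr b` of the tensor square. -/
noncomputable abbrev SS (a b : ℕ) : Submodule k (H ⊗[k] H) :=
  LinearMap.range (TensorProduct.map (gr a).subtype (gr b).subtype)

theorem S_ind {a b : ℕ} (P : H ⊗[k] H → Prop) {z : H ⊗[k] H}
    (hz : z ∈ SS gr a b)
    (h0 : P 0) (ht : ∀ x ∈ gr a, ∀ y ∈ gr b, P (x ⊗ₜ[k] y))
    (hadd : ∀ u v, P u → P v → P (u + v)) : P z := by
  obtain ⟨w, rfl⟩ := hz
  induction w using TensorProduct.induction_on with
  | zero => simpa using h0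
  | tmul x y => simpa using ht x x.2 y y.2
  | add u v hu hv => rw [map_add]; exact hadd _ _ hu hv

theorem proj_self (hπ_id : ∀ n : ℕ, ∀ x ∈ gr n, π n x = x)
    {a b : ℕ} {z : H ⊗[k] H} (hz : z ∈ SS gr a b) :
    TensorProduct.map (π a) (π b) z = z :=
  S_ind gr (fun z => TensorProduct.map (π a) (π b) z = z) hz (map_zero _)
    (fun x hx y hy => by beta_reduce; rw [TensorProduct.map_tmul, hπ_id a x hx, hπ_id b y hy])
    (fun u v hu hv => by beta_reduce at hu hv ⊢; rw [map_add, hu, hv])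

theorem proj_zero (hπ_orth : ∀ m n : ℕ, m ≠ n → ∀ x ∈ gr n, π m x = 0)
    {a b c d : ℕ} (h : a ≠ c ∨ b ≠ d) {z : H ⊗[k] H} (hz : z ∈ SS gr c d) :
    TensorProduct.map (π a) (π b) z = 0 :=
  S_ind gr (fun z => TensorProduct.map (π a) (π b) z = 0) hz (map_zero _)
    (fun x hx y hy => by
      beta_reduce
      rw [TensorProduct.map_tmul]
      rcases h with h | h
      · rw [hπ_orth a c h x hx, TensorProduct.zero_tmul]
      · rw [hπ_orth b d h y hy, TensorProduct.tmul_zero])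
    (fun u v hu hv => by beta_reduce at hu hv ⊢; rw [map_add, hu, hv, add_zero])

theorem mul_mem_SS (hmul : ∀ i j : ℕ, ∀ x ∈ gr i, ∀ y ∈ gr j, x * y ∈ gr (i + j))
    {a b c d : ℕ} {z w : H ⊗[k] H} (hz : z ∈ SS gr a b) (hw : w ∈ SS gr c d) :
    z * w ∈ SS gr (a + c) (b + d) := by
  refine S_ind gr (fun z => z * w ∈ SS gr (a + c) (b + d)) hz ?_ (fun x hx y hy => ?_)
    (fun u v hu hv => ?_)
  · beta_reduce; rw [zero_mul]; exact zero_mem _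
  · beta_reduce
    refine S_ind gr (fun w => x ⊗ₜ[k] y * w ∈ SS gr (a + c) (b + d)) hw ?_
      (fun x' hx' y' hy' => ?_) (fun u v hu hv => ?_)
    · beta_reduce; rw [mul_zero]; exact zero_mem _
    · beta_reduce
      rw [Algebra.TensorProduct.tmul_mul_tmul]
      exact ⟨(⟨x * x', hmul _ _ x hx x' hx'⟩ : gr (a + c)) ⊗ₜ
        (⟨y * y', hmul _ _ y hy y' hy'⟩ : gr (b + d)), by simp⟩
    · beta_reduce at hu hv ⊢; rw [mul_add]; exact add_mem hu hv
  · beta_reduce at hu hv ⊢; rw [add_mul]; exact add_mem hu hv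

variable (hΔ : ∀ n : ℕ, ∀ x ∈ gr n, comul (R := k) x ∈
      ⨆ p ∈ Finset.HasAntidiagonal.antidiagonal n,
        LinearMap.range (TensorProduct.map (gr p.1).subtype (gr p.2).subtype))

include hΔ in
theorem comul_mem_zero {b : H} (hb : b ∈ gr 0) : comul (R := k) b ∈ SS gr 0 0 := by
  have h := hΔ 0 b hb
  have e : Finset.HasAntidiagonal.antidiagonal (0 : ℕ) = {((0 : ℕ), (0 : ℕ))} := by decide
  simp only [e, Finset.mem_singleton, iSup_iSup_eq_left] at h
  exact h

include hΔ in
theorem comul_mem_one {m : H} (hm : m ∈ gr 1) :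
    ∃ x ∈ SS gr 0 1, ∃ y ∈ SS gr 1 0, comul (R := k) m = x + y := by
  have h := hΔ 1 m hm
  have hle : (⨆ p ∈ Finset.HasAntidiagonal.antidiagonal (1 : ℕ),
      LinearMap.range (TensorProduct.map (gr p.1).subtype (gr p.2).subtype))
      ≤ SS gr 0 1 ⊔ SS gr 1 0 := by
    refine iSup₂_le fun p hp => ?_
    have e : Finset.HasAntidiagonal.antidiagonal (1 : ℕ) = {((0 : ℕ), (1 : ℕ)), ((1 : ℕ), (0 : ℕ))} := by decide
    rw [e, Finset.mem_insert, Finset.mem_singleton] at hp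
    rcases hp with rfl | rfl
    · exact le_sup_left
    · exact le_sup_right
  obtain ⟨x, hx, y, hy, hxy⟩ := Submodule.mem_sup.mp (hle h)
  exact ⟨x, hx, y, hy, hxy.symm⟩

variable (hπ_id : ∀ n : ℕ, ∀ x ∈ gr n, π n x = x)
variable (hπ_orth : ∀ m n : ℕ, m ≠ n → ∀ x ∈ gr n, π m x = 0)
variable (hε : ∀ n : ℕ, 0 < n → ∀ x ∈ gr n, counit (R := k) x = 0)

include hπ_id in
theorem lcomul_keep (a b : ℕ) {c d : ℕ} {z : H ⊗[k] H} (hz : z ∈ SS gr c d) :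
    TensorProduct.map (TensorProduct.map (π a) (π b)) (π d)
        (TensorProduct.map (comul (R := k)) LinearMap.id z)
      = TensorProduct.map ((TensorProduct.map (π a) (π b)) ∘ₗ comul (R := k))
          LinearMap.id z := by
  refine S_ind gr (fun z => TensorProduct.map (TensorProduct.map (π a) (π b)) (π d)
      (TensorProduct.map (comul (R := k)) LinearMap.id z)
    = TensorProduct.map ((TensorProduct.map (π a) (π b)) ∘ₗ comul (R := k)) LinearMap.id z)
    hz ?_ (fun x hx y hy => ?_) (fun u v hu hv => ?_)
  · simp only [map_zero]
  · beta_reduce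
    simp only [TensorProduct.map_tmul, LinearMap.id_coe, id_eq, LinearMap.comp_apply]
    rw [hπ_id d y hy]
  · beta_reduce at hu hv ⊢; simp only [map_add, hu, hv]

include hπ_orth in
theorem lcomul_kill (a b e : ℕ) {c d : ℕ} (h : e ≠ d) {z : H ⊗[k] H} (hz : z ∈ SS gr c d) :
    TensorProduct.map (TensorProduct.map (π a) (π b)) (π e)
        (TensorProduct.map (comul (R := k)) LinearMap.id z) = 0 := by
  refine S_ind gr (fun z => TensorProduct.map (TensorProduct.map (π a) (π b)) (π e)
      (TensorProduct.map (comul (R := k)) LinearMap.id z) = 0)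
    hz ?_ (fun x hx y hy => ?_) (fun u v hu hv => ?_)
  · simp only [map_zero]
  · beta_reduce
    simp only [TensorProduct.map_tmul, LinearMap.id_coe, id_eq]
    rw [hπ_orth e d h y hy, TensorProduct.tmul_zero]
  · beta_reduce at hu hv ⊢; simp only [map_add, hu, hv, add_zero]

include hπ_id hΔ in
theorem lcomul_01 {z : H ⊗[k] H} (hz : z ∈ SS gr 0 1) :
    TensorProduct.map (TensorProduct.map (π 0) (π 0)) (π 1)
        (TensorProduct.map (comul (R := k)) LinearMap.id z)
      = TensorProduct.map (comul (R := k)) LinearMap.id z := by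
  refine S_ind gr (fun z => TensorProduct.map (TensorProduct.map (π 0) (π 0)) (π 1)
      (TensorProduct.map (comul (R := k)) LinearMap.id z)
    = TensorProduct.map (comul (R := k)) LinearMap.id z)
    hz ?_ (fun x hx y hy => ?_) (fun u v hu hv => ?_)
  · simp only [map_zero]
  · beta_reduce
    simp only [TensorProduct.map_tmul, LinearMap.id_coe, id_eq]
    rw [proj_self gr π hπ_id (comul_mem_zero gr hΔ hx), hπ_id 1 y hy]
  · beta_reduce at hu hv ⊢; simp only [map_add, hu, hv]

include hπ_id in
theorem rcomul_keep (a b : ℕ) {c d : ℕ} {z : H ⊗[k] H} (hz : z ∈ SS gr c d) :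
    TensorProduct.map (π c) (TensorProduct.map (π a) (π b))
        (TensorProduct.map LinearMap.id (comul (R := k)) z)
      = TensorProduct.map LinearMap.id
          ((TensorProduct.map (π a) (π b)) ∘ₗ comul (R := k)) z := by
  refine S_ind gr (fun z => TensorProduct.map (π c) (TensorProduct.map (π a) (π b))
      (TensorProduct.map LinearMap.id (comul (R := k)) z)
    = TensorProduct.map LinearMap.id ((TensorProduct.map (π a) (π b)) ∘ₗ comul (R := k)) z)
    hz ?_ (fun x hx y hy => ?_) (fun u v hu hv => ?_)
  · simp only [map_zero]
  · beta_reduce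
    simp only [TensorProduct.map_tmul, LinearMap.id_coe, id_eq, LinearMap.comp_apply]
    rw [hπ_id c x hx]
  · beta_reduce at hu hv ⊢; simp only [map_add, hu, hv]

include hπ_orth in
theorem rcomul_kill (a b e : ℕ) {c d : ℕ} (h : e ≠ c) {z : H ⊗[k] H} (hz : z ∈ SS gr c d) :
    TensorProduct.map (π e) (TensorProduct.map (π a) (π b))
        (TensorProduct.map LinearMap.id (comul (R := k)) z) = 0 := by
  refine S_ind gr (fun z => TensorProduct.map (π e) (TensorProduct.map (π a) (π b))
      (TensorProduct.map LinearMap.id (comul (R := k)) z) = 0)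
    hz ?_ (fun x hx y hy => ?_) (fun u v hu hv => ?_)
  · simp only [map_zero]
  · beta_reduce
    simp only [TensorProduct.map_tmul, LinearMap.id_coe, id_eq]
    rw [hπ_orth e c h x hx, TensorProduct.zero_tmul]
  · beta_reduce at hu hv ⊢; simp only [map_add, hu, hv, add_zero]

include hπ_id hΔ in
theorem rcomul_10 {z : H ⊗[k] H} (hz : z ∈ SS gr 1 0) :
    TensorProduct.map (π 1) (TensorProduct.map (π 0) (π 0))
        (TensorProduct.map LinearMap.id (comul (R := k)) z)
      = TensorProduct.map LinearMap.id (comul (R := k)) z := by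
  refine S_ind gr (fun z => TensorProduct.map (π 1) (TensorProduct.map (π 0) (π 0))
      (TensorProduct.map LinearMap.id (comul (R := k)) z)
    = TensorProduct.map LinearMap.id (comul (R := k)) z)
    hz ?_ (fun x hx y hy => ?_) (fun u v hu hv => ?_)
  · simp only [map_zero]
  · beta_reduce
    simp only [TensorProduct.map_tmul, LinearMap.id_coe, id_eq]
    rw [proj_self gr π hπ_id (comul_mem_zero gr hΔ hy), hπ_id 1 x hx]
  · beta_reduce at hu hv ⊢; simp only [map_add, hu, hv]

include hε in
theorem counit_left {z : H ⊗[k] H} (hz : z ∈ SS gr 1 0) :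
    TensorProduct.map (counit (R := k)) LinearMap.id z = 0 := by
  refine S_ind gr (fun z => TensorProduct.map (counit (R := k)) LinearMap.id z = 0)
    hz ?_ (fun x hx y hy => ?_) (fun u v hu hv => ?_)
  · simp only [map_zero]
  · beta_reduce
    simp only [TensorProduct.map_tmul]
    rw [hε 1 one_pos x hx, TensorProduct.zero_tmul]
  · beta_reduce at hu hv ⊢; simp only [map_add, hu, hv, add_zero]

include hε in
theorem counit_right {z : H ⊗[k] H} (hz : z ∈ SS gr 0 1) :
    TensorProduct.map LinearMap.id (counit (R := k)) z = 0 := by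
  refine S_ind gr (fun z => TensorProduct.map LinearMap.id (counit (R := k)) z = 0)
    hz ?_ (fun x hx y hy => ?_) (fun u v hu hv => ?_)
  · simp only [map_zero]
  · beta_reduce
    simp only [TensorProduct.map_tmul]
    rw [hε 1 one_pos y hy, TensorProduct.tmul_zero]
  · beta_reduce at hu hv ⊢; simp only [map_add, hu, hv, add_zero]

end Stmt13Aux

set_option maxHeartbeats 1000000 in
/-- Let `H = ⊕_{n≥0} H_{(n)}` be a graded Hopf algebra (grading `gr`, with linear
projections `π n` onto the components, graded multiplication, comultiplication and
counit).  Then `M := H_{(1)}` is a Hopf bimodule over `B := H_{(0)}`, with actions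
`α⁻ = π₁∘μ∘(ι₀⊗ι₁)`, `α⁺ = π₁∘μ∘(ι₁⊗ι₀)` (i.e. multiplication maps `B⊗M` and `M⊗B`
into `M`) and coactions `δ⁻ = (π₀⊗π₁)∘Δ∘ι₁`, `δ⁺ = (π₁⊗π₀)∘Δ∘ι₁`: the coactions are
counital and coassociative bicomodule structures, and are `B`-bimodule maps. -/
theorem stmt_13 {k H : Type*} [CommRing k] [Ring H] [HopfAlgebra k H]
    (gr : ℕ → Submodule k H)
    (hone : (1 : H) ∈ gr 0)
    (hmul : ∀ i j : ℕ, ∀ x ∈ gr i, ∀ y ∈ gr j, x * y ∈ gr (i + j))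
    (hsup : (⨆ n, gr n) = ⊤)
    (π : ℕ → (H →ₗ[k] H))
    (hπ_mem : ∀ (n : ℕ) (x : H), π n x ∈ gr n)
    (hπ_id : ∀ n : ℕ, ∀ x ∈ gr n, π n x = x)
    (hπ_orth : ∀ m n : ℕ, m ≠ n → ∀ x ∈ gr n, π m x = 0)
    (hΔ : ∀ n : ℕ, ∀ x ∈ gr n, comul (R := k) x ∈
      ⨆ p ∈ Finset.HasAntidiagonal.antidiagonal n,
        LinearMap.range (TensorProduct.map (gr p.1).subtype (gr p.2).subtype))
    (hε : ∀ n : ℕ, 0 < n → ∀ x ∈ gr n, counit (R := k) x = 0) :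
    let P01 : H ⊗[k] H →ₗ[k] H ⊗[k] H := TensorProduct.map (π 0) (π 1)
    let P10 : H ⊗[k] H →ₗ[k] H ⊗[k] H := TensorProduct.map (π 1) (π 0)
    -- bimodule structure
    (∀ b ∈ gr 0, ∀ m ∈ gr 1, b * m ∈ gr 1 ∧ m * b ∈ gr 1) ∧
    -- the coactions are B-bimodule maps
    (∀ b ∈ gr 0, ∀ m ∈ gr 1,
      P01 (comul (R := k) (b * m)) = comul (R := k) b * P01 (comul (R := k) m) ∧
      P01 (comul (R := k) (m * b)) = P01 (comul (R := k) m) * comul (R := k) b ∧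
      P10 (comul (R := k) (b * m)) = comul (R := k) b * P10 (comul (R := k) m) ∧
      P10 (comul (R := k) (m * b)) = P10 (comul (R := k) m) * comul (R := k) b) ∧
    -- counit laws, coassociativity and the bicomodule compatibility
    (∀ m ∈ gr 1,
      (TensorProduct.lid k H) ((TensorProduct.map (counit (R := k)) LinearMap.id)
        (P01 (comul (R := k) m))) = m ∧
      (TensorProduct.rid k H) ((TensorProduct.map LinearMap.id (counit (R := k)))
        (P10 (comul (R := k) m))) = m ∧
      (TensorProduct.assoc k H H H)
          ((TensorProduct.map (comul (R := k)) LinearMap.id) (P01 (comul (R := k) m)))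
        = (TensorProduct.map LinearMap.id (P01 ∘ₗ comul (R := k))) (P01 (comul (R := k) m)) ∧
      (TensorProduct.assoc k H H H)
          ((TensorProduct.map (P10 ∘ₗ comul (R := k)) LinearMap.id) (P10 (comul (R := k) m)))
        = (TensorProduct.map LinearMap.id (comul (R := k))) (P10 (comul (R := k) m)) ∧
      (TensorProduct.assoc k H H H)
          ((TensorProduct.map (P01 ∘ₗ comul (R := k)) LinearMap.id) (P10 (comul (R := k) m)))
        = (TensorProduct.map LinearMap.id (P10 ∘ₗ comul (R := k))) (P01 (comul (R := k) m))) := by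
  intro P01 P10
  have hco : ∀ a : H, (TensorProduct.assoc k H H H)
      (TensorProduct.map (comul (R := k)) LinearMap.id (comul (R := k) a))
      = TensorProduct.map LinearMap.id (comul (R := k)) (comul (R := k) a) :=
    fun a => Coalgebra.coassoc_apply a
  refine ⟨fun b hb m hm => ⟨hmul 0 1 b hb m hm, hmul 1 0 m hm b hb⟩, ?_, ?_⟩
  · intro b hb m hm
    obtain ⟨x, hx, y, hy, hxy⟩ := Stmt13Aux.comul_mem_one gr hΔ hm
    have hcb := Stmt13Aux.comul_mem_zero gr hΔ hb
    have hP01x : TensorProduct.map (π 0) (π 1) (comul (R := k) m) = x := by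
      rw [hxy, map_add, Stmt13Aux.proj_self gr π hπ_id hx,
        Stmt13Aux.proj_zero gr π hπ_orth (Or.inl zero_ne_one) hy, add_zero]
    have hP10y : TensorProduct.map (π 1) (π 0) (comul (R := k) m) = y := by
      rw [hxy, map_add, Stmt13Aux.proj_zero gr π hπ_orth (Or.inl one_ne_zero) hx,
        Stmt13Aux.proj_self gr π hπ_id hy, zero_add]
    have hbx := Stmt13Aux.mul_mem_SS gr hmul hcb hx
    have hby := Stmt13Aux.mul_mem_SS gr hmul hcb hy
    have hxb := Stmt13Aux.mul_mem_SS gr hmul hx hcb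
    have hyb := Stmt13Aux.mul_mem_SS gr hmul hy hcb
    simp only [Nat.zero_add, Nat.add_zero] at hbx hby hxb hyb
    refine ⟨?_, ?_, ?_, ?_⟩
    · show TensorProduct.map (π 0) (π 1) (comul (R := k) (b * m))
        = comul (R := k) b * TensorProduct.map (π 0) (π 1) (comul (R := k) m)
      rw [Bialgebra.comul_mul, hP01x, hxy, mul_add, map_add,
        Stmt13Aux.proj_self gr π hπ_id hbx,
        Stmt13Aux.proj_zero gr π hπ_orth (Or.inl zero_ne_one) hby, add_zero]
    · show TensorProduct.map (π 0) (π 1) (comul (R := k) (m * b))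
        = TensorProduct.map (π 0) (π 1) (comul (R := k) m) * comul (R := k) b
      rw [Bialgebra.comul_mul, hP01x, hxy, add_mul, map_add,
        Stmt13Aux.proj_self gr π hπ_id hxb,
        Stmt13Aux.proj_zero gr π hπ_orth (Or.inl zero_ne_one) hyb, add_zero]
    · show TensorProduct.map (π 1) (π 0) (comul (R := k) (b * m))
        = comul (R := k) b * TensorProduct.map (π 1) (π 0) (comul (R := k) m)
      rw [Bialgebra.comul_mul, hP10y, hxy, mul_add, map_add,
        Stmt13Aux.proj_zero gr π hπ_orth (Or.inl one_ne_zero) hbx,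
        Stmt13Aux.proj_self gr π hπ_id hby, zero_add]
    · show TensorProduct.map (π 1) (π 0) (comul (R := k) (m * b))
        = TensorProduct.map (π 1) (π 0) (comul (R := k) m) * comul (R := k) b
      rw [Bialgebra.comul_mul, hP10y, hxy, add_mul, map_add,
        Stmt13Aux.proj_zero gr π hπ_orth (Or.inl one_ne_zero) hxb,
        Stmt13Aux.proj_self gr π hπ_id hyb, zero_add]
  · intro m hm
    obtain ⟨x, hx, y, hy, hxy⟩ := Stmt13Aux.comul_mem_one gr hΔ hm
    have hP01x : TensorProduct.map (π 0) (π 1) (comul (R := k) m) = x := by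
      rw [hxy, map_add, Stmt13Aux.proj_self gr π hπ_id hx,
        Stmt13Aux.proj_zero gr π hπ_orth (Or.inl zero_ne_one) hy, add_zero]
    have hP10y : TensorProduct.map (π 1) (π 0) (comul (R := k) m) = y := by
      rw [hxy, map_add, Stmt13Aux.proj_zero gr π hπ_orth (Or.inl one_ne_zero) hx,
        Stmt13Aux.proj_self gr π hπ_id hy, zero_add]
    refine ⟨?_, ?_, ?_, ?_, ?_⟩
    · show (TensorProduct.lid k H) ((TensorProduct.map (counit (R := k)) LinearMap.id)
        (TensorProduct.map (π 0) (π 1) (comul (R := k) m))) = m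
      rw [hP01x]
      have hcc : TensorProduct.map (counit (R := k)) LinearMap.id (comul (R := k) m)
          = (1 : k) ⊗ₜ[k] m := Coalgebra.rTensor_counit_comul m
      have h1 : TensorProduct.map (counit (R := k)) LinearMap.id x = (1 : k) ⊗ₜ[k] m := by
        rw [← hcc, hxy, map_add, Stmt13Aux.counit_left gr hε hy, add_zero]
      rw [h1, TensorProduct.lid_tmul, one_smul]
    · show (TensorProduct.rid k H) ((TensorProduct.map LinearMap.id (counit (R := k)))
        (TensorProduct.map (π 1) (π 0) (comul (R := k) m))) = m
      rw [hP10y]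
      have hcc : TensorProduct.map LinearMap.id (counit (R := k)) (comul (R := k) m)
          = m ⊗ₜ[k] (1 : k) := Coalgebra.lTensor_counit_comul m
      have h1 : TensorProduct.map LinearMap.id (counit (R := k)) y = m ⊗ₜ[k] (1 : k) := by
        rw [← hcc, hxy, map_add, Stmt13Aux.counit_right gr hε hx, zero_add]
      rw [h1, TensorProduct.rid_tmul, one_smul]
    · show (TensorProduct.assoc k H H H)
          ((TensorProduct.map (comul (R := k)) LinearMap.id)
            (TensorProduct.map (π 0) (π 1) (comul (R := k) m)))
        = (TensorProduct.map LinearMap.id (TensorProduct.map (π 0) (π 1) ∘ₗ comul (R := k)))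
            (TensorProduct.map (π 0) (π 1) (comul (R := k) m))
      rw [hP01x]
      have e1 : TensorProduct.map (TensorProduct.map (π 0) (π 0)) (π 1)
          (TensorProduct.map (comul (R := k)) LinearMap.id (comul (R := k) m))
          = TensorProduct.map (comul (R := k)) LinearMap.id x := by
        rw [hxy, map_add, map_add, Stmt13Aux.lcomul_01 gr π hΔ hπ_id hx,
          Stmt13Aux.lcomul_kill gr π hπ_orth 0 0 1 one_ne_zero hy, add_zero]
      have e2 : TensorProduct.map (π 0) (TensorProduct.map (π 0) (π 1))
          (TensorProduct.map LinearMap.id (comul (R := k)) (comul (R := k) m))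
          = TensorProduct.map LinearMap.id (TensorProduct.map (π 0) (π 1) ∘ₗ comul (R := k)) x := by
        rw [hxy, map_add, map_add, Stmt13Aux.rcomul_keep gr π hπ_id 0 1 hx,
          Stmt13Aux.rcomul_kill gr π hπ_orth 0 1 0 zero_ne_one hy, add_zero]
      rw [← e1, ← TensorProduct.map_map_assoc, hco m, e2]
    · show (TensorProduct.assoc k H H H)
          ((TensorProduct.map (TensorProduct.map (π 1) (π 0) ∘ₗ comul (R := k)) LinearMap.id)
            (TensorProduct.map (π 1) (π 0) (comul (R := k) m)))
        = (TensorProduct.map LinearMap.id (comul (R := k)))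
            (TensorProduct.map (π 1) (π 0) (comul (R := k) m))
      rw [hP10y]
      have e1 : TensorProduct.map (TensorProduct.map (π 1) (π 0)) (π 0)
          (TensorProduct.map (comul (R := k)) LinearMap.id (comul (R := k) m))
          = TensorProduct.map (TensorProduct.map (π 1) (π 0) ∘ₗ comul (R := k)) LinearMap.id y := by
        rw [hxy, map_add, map_add, Stmt13Aux.lcomul_kill gr π hπ_orth 1 0 0 zero_ne_one hx,
          Stmt13Aux.lcomul_keep gr π hπ_id 1 0 hy, zero_add]
      have e2 : TensorProduct.map (π 1) (TensorProduct.map (π 0) (π 0))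
          (TensorProduct.map LinearMap.id (comul (R := k)) (comul (R := k) m))
          = TensorProduct.map LinearMap.id (comul (R := k)) y := by
        rw [hxy, map_add, map_add, Stmt13Aux.rcomul_kill gr π hπ_orth 0 0 1 one_ne_zero hx,
          Stmt13Aux.rcomul_10 gr π hΔ hπ_id hy, zero_add]
      rw [← e1, ← TensorProduct.map_map_assoc, hco m, e2]
    · show (TensorProduct.assoc k H H H)
          ((TensorProduct.map (TensorProduct.map (π 0) (π 1) ∘ₗ comul (R := k)) LinearMap.id)
            (TensorProduct.map (π 1) (π 0) (comul (R := k) m)))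
        = (TensorProduct.map LinearMap.id (TensorProduct.map (π 1) (π 0) ∘ₗ comul (R := k)))
            (TensorProduct.map (π 0) (π 1) (comul (R := k) m))
      rw [hP10y, hP01x]
      have e1 : TensorProduct.map (TensorProduct.map (π 0) (π 1)) (π 0)
          (TensorProduct.map (comul (R := k)) LinearMap.id (comul (R := k) m))
          = TensorProduct.map (TensorProduct.map (π 0) (π 1) ∘ₗ comul (R := k)) LinearMap.id y := by
        rw [hxy, map_add, map_add, Stmt13Aux.lcomul_kill gr π hπ_orth 0 1 0 zero_ne_one hx,
          Stmt13Aux.lcomul_keep gr π hπ_id 0 1 hy, zero_add]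
      have e2 : TensorProduct.map (π 0) (TensorProduct.map (π 1) (π 0))
          (TensorProduct.map LinearMap.id (comul (R := k)) (comul (R := k) m))
          = TensorProduct.map LinearMap.id (TensorProduct.map (π 1) (π 0) ∘ₗ comul (R := k)) x := by
        rw [hxy, map_add, map_add, Stmt13Aux.rcomul_keep gr π hπ_id 1 0 hx,
          Stmt13Aux.rcomul_kill gr π hπ_orth 1 0 0 zero_ne_one hy, add_zero]
      rw [← e1, ← TensorProduct.map_map_assoc, hco m, e2]
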